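/- Let α ∈ (0,1) and β ∈ ℝ. For ν > 0 and t > 0 define θ(t;ν) = arg( D(t;ν) + i·sin((1−α)π/2) ), where D(t;ν) = (t² − (β/ν)²)/(1 + (β/ν)²)·t^{1−α} + cos((1−α)π/2), and define θ₀(u) = arctan( sin((1−α)π/2) / (u^{3−α} + cos((1−α)π/2)) ). Then there exist ν₀ > 0 and a continuous function g : (0,∞) → (0,∞), independent of ν, with g(u) = O(u^{1−α}) as u → 0 and g(u) = O(u^{α−3}) as u → ∞, such that for all ν ≥ ν₀ and all u > 0: |θ(u;ν) − θ₀(u)| ≤ g(u)·(β/ν)². -/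

import Mathlib

open Real Complex Set Filter

/-- `θ(t;ν) = arg( D(t;ν) + i·sin((1−α)π/2) )` with
`D(t;ν) = (t² − (β/ν)²)/(1 + (β/ν)²)·t^{1−α} + cos((1−α)π/2)`. -/
noncomputable def thetaNu (α β : ℝ) (ν : ℝ) (t : ℝ) : ℝ :=
  Complex.arg ((((t ^ 2 - (β / ν) ^ 2) / (1 + (β / ν) ^ 2) * t ^ (1 - α)
      + Real.cos ((1 - α) * π / 2) : ℝ) : ℂ)
    + (Real.sin ((1 - α) * π / 2) : ℝ) * Complex.I)

/-- `θ₀(u) = arctan( sin((1−α)π/2)/(u^{3−α} + cos((1−α)π/2)) )`. -/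
noncomputable def theta0 (α : ℝ) (u : ℝ) : ℝ :=
  Real.arctan (Real.sin ((1 - α) * π / 2) / (u ^ (3 - α) + Real.cos ((1 - α) * π / 2)))

lemma my_arctan_lip (a b : ℝ) : |Real.arctan a - Real.arctan b| ≤ |a - b| := by
  have h : LipschitzWith 1 Real.arctan := by
    apply lipschitzWith_of_nnnorm_deriv_le Real.differentiable_arctan
    intro x
    rw [← NNReal.coe_le_coe, coe_nnnorm, NNReal.coe_one, Real.deriv_arctan,
      Real.norm_eq_abs]
    simp only
    rw [_root_.abs_of_nonneg (by positivity), div_le_one (by positivity)]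
    nlinarith [sq_nonneg x]
  have := h.dist_le_mul a b
  simpa [Real.dist_eq] using this

lemma my_arg_eq_arctan {x y : ℝ} (hx : 0 < x) :
    Complex.arg ((x : ℂ) + (y : ℝ) * Complex.I) = Real.arctan (y / x) := by
  have hre : (0:ℝ) < ((x:ℂ) + (y:ℝ) * Complex.I).re := by simp [hx]
  have h1 : |Complex.arg ((x:ℂ) + (y:ℝ) * Complex.I)| < π/2 :=
    Complex.abs_arg_lt_pi_div_two_iff.mpr (Or.inl hre)
  obtain ⟨h1a, h1b⟩ := abs_lt.mp h1
  have him : ((x:ℂ) + (y:ℝ) * Complex.I).im = y := by simp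
  have hre' : ((x:ℂ) + (y:ℝ) * Complex.I).re = x := by simp
  rw [show y / x = ((x:ℂ) + (y:ℝ) * Complex.I).im / ((x:ℂ) + (y:ℝ) * Complex.I).re by
    rw [him, hre'], ← Complex.tan_arg]
  exact (Real.arctan_tan h1a h1b).symm

set_option maxHeartbeats 2000000 in
/-- Uniform bound `|θ(u;ν) − θ₀(u)| ≤ g(u)·(β/ν)²` for large `ν`, with `g` continuous,
positive, `O(u^{1−α})` at `0` and `O(u^{α−3})` at `∞`. -/
theorem thetaNu_approx_theta0
    (α β : ℝ) (hα : α ∈ Set.Ioo (0:ℝ) 1) :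
    ∃ ν₀ : ℝ, 0 < ν₀ ∧
    ∃ g : ℝ → ℝ,
      ContinuousOn g (Ioi 0) ∧
      (∀ u : ℝ, 0 < u → 0 < g u) ∧
      (∃ c : ℝ, 0 < c ∧ ∃ δ : ℝ, 0 < δ ∧ ∀ u ∈ Ioo (0:ℝ) δ, g u ≤ c * u ^ (1 - α)) ∧
      (∃ c : ℝ, 0 < c ∧ ∃ R : ℝ, 0 < R ∧ ∀ u : ℝ, R ≤ u → g u ≤ c * u ^ (α - 3)) ∧
      (∀ ν : ℝ, ν₀ ≤ ν → ∀ u : ℝ, 0 < u →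
        |thetaNu α β ν u - theta0 α u| ≤ g u * (β / ν) ^ 2) := by
  obtain ⟨hα0, hα1⟩ := hα
  set s : ℝ := Real.sin ((1 - α) * π / 2) with hs_def
  set c : ℝ := Real.cos ((1 - α) * π / 2) with hc_def
  have hπ := Real.pi_pos
  have hs : 0 < s := Real.sin_pos_of_pos_of_lt_pi (by nlinarith) (by nlinarith)
  have hc : 0 < c := Real.cos_pos_of_mem_Ioo ⟨by nlinarith, by nlinarith⟩
  refine ⟨(|β| + 1) * (3 + 2 / c), by positivity, ?_⟩
  refine ⟨fun u => s * u ^ (1 - α) * (1 + u ^ 2)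
      / (max (c / 2) (u ^ (3 - α) / 3) * max c (u ^ (3 - α))), ?_, ?_, ?_, ?_, ?_⟩
  · -- continuity
    have h1 : ContinuousOn (fun u : ℝ => u ^ (1 - α)) (Ioi 0) := fun x hx =>
      (Real.continuousAt_rpow_const x _ (Or.inl (ne_of_gt hx))).continuousWithinAt
    have h3 : ContinuousOn (fun u : ℝ => u ^ (3 - α)) (Ioi 0) := fun x hx =>
      (Real.continuousAt_rpow_const x _ (Or.inl (ne_of_gt hx))).continuousWithinAt
    apply ContinuousOn.div
    · exact ((continuousOn_const.mul h1).mul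
        (continuousOn_const.add (continuous_pow 2).continuousOn))
    · have hm1 : ContinuousOn (fun u : ℝ => max (c / 2) (u ^ (3 - α) / 3)) (Ioi 0) :=
        ContinuousOn.sup continuousOn_const (h3.div_const 3)
      have hm2 : ContinuousOn (fun u : ℝ => max c (u ^ (3 - α))) (Ioi 0) :=
        ContinuousOn.sup continuousOn_const h3
      exact hm1.mul hm2
    · intro x hx
      have hx' : (0:ℝ) < x := hx
      have : (0:ℝ) < max (c / 2) (x ^ (3 - α) / 3) * max c (x ^ (3 - α)) :=
        mul_pos (lt_max_of_lt_left (by positivity)) (lt_max_of_lt_left hc)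
      exact ne_of_gt this
  · -- positivity
    intro u hu
    have h1 : (0:ℝ) < u ^ (1 - α) := Real.rpow_pos_of_pos hu _
    have h2 : (0:ℝ) < max (c / 2) (u ^ (3 - α) / 3) * max c (u ^ (3 - α)) :=
      mul_pos (lt_max_of_lt_left (by positivity)) (lt_max_of_lt_left hc)
    positivity
  · -- small u bound
    refine ⟨4 * s / c ^ 2, by positivity, 1, one_pos, ?_⟩
    rintro u ⟨hu0, hu1⟩
    have hp : (0:ℝ) < u ^ (1 - α) := Real.rpow_pos_of_pos hu0 _
    have hM1 : c / 2 ≤ max (c / 2) (u ^ (3 - α) / 3) := le_max_left _ _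
    have hM2 : c ≤ max c (u ^ (3 - α)) := le_max_left _ _
    have hden : c / 2 * c ≤ max (c / 2) (u ^ (3 - α) / 3) * max c (u ^ (3 - α)) :=
      mul_le_mul hM1 hM2 hc.le (le_trans (by positivity) hM1)
    rw [div_le_iff₀ (by nlinarith)]
    have hu2 : 1 + u ^ 2 ≤ 2 := by nlinarith
    calc s * u ^ (1 - α) * (1 + u ^ 2) ≤ s * u ^ (1 - α) * 2 :=
        mul_le_mul_of_nonneg_left hu2 (by positivity)
      _ = (4 * s / c ^ 2) * u ^ (1 - α) * (c / 2 * c) := by field_simp; ring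
      _ ≤ 4 * s / c ^ 2 * u ^ (1 - α) *
          (max (c / 2) (u ^ (3 - α) / 3) * max c (u ^ (3 - α))) := by
        apply mul_le_mul_of_nonneg_left hden (by positivity)
  · -- large u bound
    refine ⟨6 * s, by positivity, 1, one_pos, ?_⟩
    intro u hu
    have hu0 : (0:ℝ) < u := lt_of_lt_of_le one_pos hu
    have hq : (0:ℝ) < u ^ (3 - α) := Real.rpow_pos_of_pos hu0 _
    have hM1 : u ^ (3 - α) / 3 ≤ max (c / 2) (u ^ (3 - α) / 3) := le_max_right _ _
    have hM2 : u ^ (3 - α) ≤ max c (u ^ (3 - α)) := le_max_right _ _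
    have hden : u ^ (3 - α) / 3 * u ^ (3 - α)
        ≤ max (c / 2) (u ^ (3 - α) / 3) * max c (u ^ (3 - α)) :=
      mul_le_mul hM1 hM2 hq.le (le_trans (by positivity) hM1)
    have hMpos : (0:ℝ) < max (c / 2) (u ^ (3 - α) / 3) * max c (u ^ (3 - α)) :=
      mul_pos (lt_max_of_lt_left (by positivity)) (lt_max_of_lt_left hc)
    rw [div_le_iff₀ hMpos]
    have hpow : u ^ (1 - α) * u ^ 2 = u ^ (3 - α) := by
      rw [show (u:ℝ) ^ 2 = u ^ ((2:ℕ):ℝ) by rw [Real.rpow_natCast],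
        ← Real.rpow_add hu0, show (1 - α) + ((2:ℕ):ℝ) = 3 - α by push_cast; ring]
    have hple : u ^ (1 - α) ≤ u ^ (3 - α) :=
      Real.rpow_le_rpow_of_exponent_le hu (by linarith)
    have hinv : u ^ (α - 3) * u ^ (3 - α) = 1 := by
      rw [← Real.rpow_add hu0, show α - 3 + (3 - α) = 0 by ring, Real.rpow_zero]
    have hLHS : s * u ^ (1 - α) * (1 + u ^ 2) ≤ 2 * s * u ^ (3 - α) := by
      have : u ^ (1 - α) * (1 + u ^ 2) = u ^ (1 - α) + u ^ (3 - α) := by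
        rw [mul_add, mul_one, hpow]
      nlinarith
    have hRHS : 2 * s * u ^ (3 - α) ≤ 6 * s * u ^ (α - 3) *
        (max (c / 2) (u ^ (3 - α) / 3) * max c (u ^ (3 - α))) := by
      have h0 : (0:ℝ) < u ^ (α - 3) := Real.rpow_pos_of_pos hu0 _
      calc 2 * s * u ^ (3 - α)
          = 6 * s * u ^ (α - 3) * (u ^ (3 - α) / 3 * u ^ (3 - α)) := by
            have : u ^ (α - 3) * (u ^ (3 - α) * u ^ (3 - α))
                = u ^ (3 - α) := by
              rw [← mul_assoc, hinv, one_mul]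
            nlinarith [this]
        _ ≤ _ := by apply mul_le_mul_of_nonneg_left hden (by positivity)
    linarith
  · -- main estimate
    intro ν hν u hu
    simp only
    set ε : ℝ := β / ν with hε_def
    have hν0 : (0:ℝ) < ν := lt_of_lt_of_le (by positivity) hν
    have h32c : (1:ℝ) ≤ 3 + 2 / c := by
      have := div_pos (show (0:ℝ) < 2 by norm_num) hc
      linarith
    have hεa : |ε| ≤ 1 / (3 + 2 / c) := by
      rw [hε_def, abs_div, abs_of_pos hν0, div_le_div_iff₀ hν0 (by positivity)]
      nlinarith [abs_nonneg β, hν, h32c]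
    have hεa3 : |ε| ≤ 1 / 3 := le_trans hεa (by
      rw [div_le_div_iff₀ (by positivity) (by norm_num)]
      nlinarith [div_pos (show (0:ℝ) < 2 by norm_num) hc])
    have hεac : |ε| ≤ c / 2 := le_trans hεa (by
      rw [div_le_div_iff₀ (by positivity) (by positivity)]
      have h2c : 2 / c * (c / 2) = 1 := by field_simp
      nlinarith)
    have hεle1 : |ε| ≤ 1 := le_trans hεa3 (by norm_num)
    have hsq : ε ^ 2 = |ε| * |ε| := by rw [← _root_.sq_abs]; ring
    have hε1 : ε ^ 2 ≤ 1 / 3 := by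
      rw [hsq]
      calc |ε| * |ε| ≤ (1/3) * 1 :=
            mul_le_mul hεa3 hεle1 (abs_nonneg _) (by norm_num)
        _ = 1/3 := by ring
    have hεc : ε ^ 2 ≤ c / 2 := by
      rw [hsq]
      calc |ε| * |ε| ≤ (c/2) * 1 :=
            mul_le_mul hεac hεle1 (abs_nonneg _) (by positivity)
        _ = c/2 := by ring
    have hε0 : (0:ℝ) ≤ ε ^ 2 := sq_nonneg _
    set p : ℝ := u ^ (1 - α) with hp_def
    have hp : 0 < p := Real.rpow_pos_of_pos hu _
    have hqp : u ^ (3 - α) = u ^ 2 * p := by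
      rw [hp_def, show (u:ℝ) ^ 2 = u ^ ((2:ℕ):ℝ) by rw [Real.rpow_natCast],
        ← Real.rpow_add hu, show ((2:ℕ):ℝ) + (1 - α) = 3 - α by push_cast; ring]
    set D : ℝ := (u ^ 2 - ε ^ 2) / (1 + ε ^ 2) * p + c with hD_def
    set D₀ : ℝ := u ^ 2 * p + c with hD0_def
    have hbody : (u ^ 2 - (β / ν) ^ 2) / (1 + (β / ν) ^ 2) * u ^ (1 - α)
        + Real.cos ((1 - α) * π / 2) = D := by
      rw [hD_def, hε_def, hp_def, hc_def]
    have hbody0 : u ^ (3 - α) + Real.cos ((1 - α) * π / 2) = D₀ := by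
      rw [hD0_def, hqp, hc_def]
    clear_value ε p D D₀
    have h1ε : (0:ℝ) < 1 + ε ^ 2 := by positivity
    have hDc : c / 2 ≤ D := by
      rcases le_or_gt (ε ^ 2) (u ^ 2) with h | h
      · have h0 : 0 ≤ (u ^ 2 - ε ^ 2) / (1 + ε ^ 2) * p :=
          mul_nonneg (div_nonneg (by linarith) h1ε.le) hp.le
        rw [hD_def]; linarith
      · have hu2' : u ^ 2 ≤ 1 := by linarith
        have hu1 : u ≤ 1 :=
          le_trans (le_abs_self u) ((sq_le_one_iff_abs_le_one u).mp hu2')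
        have hple : p ≤ 1 := by
          rw [hp_def]; exact Real.rpow_le_one hu.le hu1 (by linarith : (0:ℝ) ≤ 1 - α)
        have hkey : -(c / 2) ≤ (u ^ 2 - ε ^ 2) / (1 + ε ^ 2) := by
          rw [le_div_iff₀ h1ε]
          nlinarith [sq_nonneg u]
        have := mul_le_mul_of_nonneg_right hkey hp.le
        rw [hD_def]
        nlinarith
    have hDq : u ^ 2 * p / 3 ≤ D := by
      have hfrac : (3/4) * u ^ 2 - ε ^ 2 ≤ (u ^ 2 - ε ^ 2) / (1 + ε ^ 2) := by
        rw [le_div_iff₀ h1ε]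
        nlinarith [sq_nonneg ε, sq_nonneg (ε * u), sq_nonneg u]
      have hstep := mul_le_mul_of_nonneg_right hfrac hp.le
      rcases le_or_gt u 1 with h | h
      · have hple : p ≤ 1 := by
          rw [hp_def]; exact Real.rpow_le_one hu.le h (by linarith : (0:ℝ) ≤ 1 - α)
        rw [hD_def]
        nlinarith
      · have hu21 : (1:ℝ) ≤ u ^ 2 := by nlinarith
        have hp2 : p ≤ u ^ 2 * p := by
          nlinarith [mul_le_mul_of_nonneg_right hu21 hp.le]
        rw [hD_def]
        nlinarith
    have hD0c : c ≤ D₀ := by rw [hD0_def]; nlinarith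
    have hD0q : u ^ 2 * p ≤ D₀ := by rw [hD0_def]; linarith
    have hDpos : 0 < D := lt_of_lt_of_le (by positivity) hDc
    have hD0pos : 0 < D₀ := lt_of_lt_of_le hc hD0c
    have hθν : thetaNu α β ν u = Real.arctan (s / D) := by
      have hpos' : (0:ℝ) < (u ^ 2 - (β / ν) ^ 2) / (1 + (β / ν) ^ 2) * u ^ (1 - α)
          + Real.cos ((1 - α) * π / 2) := by rw [hbody]; exact hDpos
      simp only [thetaNu]
      rw [my_arg_eq_arctan hpos', hbody, hs_def]
    have hθ0 : theta0 α u = Real.arctan (s / D₀) := by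
      simp only [theta0]
      rw [hbody0, hs_def]
    rw [hθν, hθ0]
    have hDD : D₀ - D = ε ^ 2 * (1 + u ^ 2) * p / (1 + ε ^ 2) := by
      rw [hD_def, hD0_def]
      field_simp
      ring
    have hdiff : s / D - s / D₀ = s * (ε ^ 2 * (1 + u ^ 2) * p)
        / ((1 + ε ^ 2) * (D * D₀)) := by
      rw [div_sub_div _ _ hDpos.ne' hD0pos.ne',
        show s * D₀ - D * s = s * (D₀ - D) by ring, hDD,
        ← mul_div_assoc, div_div]
    have hnum : (0:ℝ) ≤ s * (ε ^ 2 * (1 + u ^ 2) * p) :=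
      mul_nonneg hs.le (mul_nonneg (mul_nonneg hε0 (by positivity)) hp.le)
    have hM1 : max (c / 2) (u ^ (3 - α) / 3) ≤ D := by
      rw [hqp]; exact max_le hDc hDq
    have hM2 : max c (u ^ (3 - α)) ≤ D₀ := by
      rw [hqp]; exact max_le hD0c hD0q
    have hMpos : (0:ℝ) < max (c / 2) (u ^ (3 - α) / 3) * max c (u ^ (3 - α)) :=
      mul_pos (lt_max_of_lt_left (by positivity)) (lt_max_of_lt_left hc)
    have hdenle : max (c / 2) (u ^ (3 - α) / 3) * max c (u ^ (3 - α))
        ≤ (1 + ε ^ 2) * (D * D₀) := by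
      have h1 : max (c / 2) (u ^ (3 - α) / 3) * max c (u ^ (3 - α)) ≤ D * D₀ :=
        mul_le_mul hM1 hM2 (le_trans hc.le (le_max_left _ _)) hDpos.le
      nlinarith [mul_pos hDpos hD0pos]
    calc |Real.arctan (s / D) - Real.arctan (s / D₀)| ≤ |s / D - s / D₀| :=
          my_arctan_lip _ _
      _ = s * (ε ^ 2 * (1 + u ^ 2) * p) / ((1 + ε ^ 2) * (D * D₀)) := by
          rw [hdiff, _root_.abs_of_nonneg (div_nonneg hnum
            (mul_pos h1ε (mul_pos hDpos hD0pos)).le)]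
      _ ≤ s * (ε ^ 2 * (1 + u ^ 2) * p)
          / (max (c / 2) (u ^ (3 - α) / 3) * max c (u ^ (3 - α))) :=
          div_le_div_of_nonneg_left hnum hMpos hdenle
      _ = s * p * (1 + u ^ 2)
          / (max (c / 2) (u ^ (3 - α) / 3) * max c (u ^ (3 - α))) * ε ^ 2 := by
          ring
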